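/- arXiv:1204.5243 — 3 statements merged into one kernel-verified Lean document; each statement's English description precedes it below -/
import Mathlib

section
/- Let 𝒴 ⊆ ℝ be measurable and Γ ⊆ ℝ, and let φ : 𝒴 × Γ → (0, ∞) be a kernel such that each φ(·, γ) is a probability density on 𝒴. Let k_0 ≥ 1, let p_0 = (p_{01}, …, p_{0k_0}) lie in the probability simplex, and let γ_0 = (γ_{01}, …, γ_{0k_0}) ∈ Γ^{k_0} satisfy min_{s < j} |γ_{0s} − γ_{0j}| ≥ ε_1 for some ε_1 > 0; set f_0(y) = Σ_{h=1}^{k_0} p_{0h} φ(y, γ_{0h}). Assume: (A1) for every η > 0 there is δ > 0 such that for all y ∈ 𝒴 and all γ_1, γ_2 ∈ Γ with |γ_1 − γ_2| < δ one has |φ(y, γ_1) − φ(y, γ_2)| < η; (A2) φ is bounded above by a constant; (A3) there is a compact set D_0 ⊆ Γ containing γ_{01}, …, γ_{0k_0} in its interior such that ∫ f_0(y) |log sup_{γ ∈ D_0} φ(y, γ) − log inf_{γ ∈ D_0} φ(y, γ)| dy < ∞; (A4) the prior π on Γ^{k_0} has a Lebesgue density that is continuous, and for every x ∈ Γ^{k_0}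 with min_{s < j} |x_s − x_j| ≥ υ for some υ > 0 there exists δ > 0 such that the density of π is strictly positive at every γ with ‖γ − x‖_1 < δ; and the prior λ on the simplex {p : p_h ≥ 0, Σ p_h = 1} assigns strictly positive mass to every nonempty relatively open subset of the simplex. Then for every ε > 0, (λ ⊗ π){(p, γ) : ∫ f_0(y) log(f_0(y) / f_{p,γ}(y)) dy < ε} > 0, where f_{p,γ}(y) = Σ_{h=1}^{k_0} p_h φ(y, γ_h). That is, f_0 is in the Kullback–Leibler support of the induced prior on mixture densities. -/
open MeasureTheory

set_option maxHeartbeats 1000000 in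
/-- Lemma 1: under conditions A1–A4 and positivity of the
Dirichlet-type prior `lam` on the simplex, the true finite mixture `f₀` lies
in the Kullback–Leibler support of the induced prior on mixture densities. -/
theorem stmt_4 (𝒴 : Set ℝ) (h𝒴 : MeasurableSet 𝒴) (Γs : Set ℝ)
    (φ : ℝ → ℝ → ℝ) (k₀ : ℕ) (hk₀ : 1 ≤ k₀)
    (hφpos : ∀ y ∈ 𝒴, ∀ γ ∈ Γs, 0 < φ y γ)
    (hφdens : ∀ γ ∈ Γs, (∫ y in 𝒴, φ y γ) = 1)
    (p₀ : Fin k₀ → ℝ) (hp₀nn : ∀ i, 0 ≤ p₀ i) (hp₀sum : ∑ i, p₀ i = 1)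
    (γ₀ : Fin k₀ → ℝ) (hγ₀ : ∀ i, γ₀ i ∈ Γs)
    (ε₁ : ℝ) (hε₁ : 0 < ε₁)
    (hsep : ∀ s j : Fin k₀, s ≠ j → ε₁ ≤ |γ₀ s - γ₀ j|)
    -- condition A1: uniform (in y) uniform continuity of γ ↦ φ(y, γ)
    (hA1 : ∀ η : ℝ, 0 < η → ∃ δ : ℝ, 0 < δ ∧ ∀ y ∈ 𝒴, ∀ γ₁ ∈ Γs, ∀ γ₂ ∈ Γs,
      |γ₁ - γ₂| < δ → |φ y γ₁ - φ y γ₂| < η)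
    -- condition A2: φ is bounded above by a constant
    (hA2 : ∃ Cb : ℝ, ∀ y ∈ 𝒴, ∀ γ ∈ Γs, φ y γ ≤ Cb)
    -- condition A3: integrable log-envelope over a compact set D₀
    (D₀ : Set ℝ) (hD₀c : IsCompact D₀) (hD₀s : D₀ ⊆ Γs)
    (hD₀i : ∀ i, γ₀ i ∈ interior D₀)
    (hA3 : IntegrableOn (fun y => (∑ i, p₀ i * φ y (γ₀ i)) *
        |Real.log (sSup ((fun γ => φ y γ) '' D₀)) -
          Real.log (sInf ((fun γ => φ y γ) '' D₀))|) 𝒴)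
    -- the prior on locations has a continuous Lebesgue density πd on Γ^{k₀}
    (πd : (Fin k₀ → ℝ) → ℝ) (hπdc : Continuous πd) (hπdnn : ∀ γ, 0 ≤ πd γ)
    (hπsupp : ∀ γ : Fin k₀ → ℝ, (∃ i, γ i ∉ Γs) → πd γ = 0)
    -- condition A4: positivity of πd near well-separated configurations
    (hA4 : ∀ x : Fin k₀ → ℝ, (∀ i, x i ∈ Γs) →
      ∀ υ : ℝ, 0 < υ → (∀ s j : Fin k₀, s ≠ j → υ ≤ |x s - x j|) →
      ∃ δ : ℝ, 0 < δ ∧ ∀ γ : Fin k₀ → ℝ, (∑ i, |γ i - x i|) < δ → 0 < πd γ)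
    -- the prior lam on the weights charges every relatively open subset of
    -- the simplex and is concentrated on the simplex
    (lam : Measure (Fin k₀ → ℝ))
    (hlamsupp : lam {p : Fin k₀ → ℝ | ¬ ((∀ i, 0 ≤ p i) ∧ ∑ i, p i = 1)} = 0)
    (hlampos : ∀ U : Set (Fin k₀ → ℝ), IsOpen U →
      (U ∩ {p : Fin k₀ → ℝ | (∀ i, 0 ≤ p i) ∧ ∑ i, p i = 1}).Nonempty →
      0 < lam (U ∩ {p : Fin k₀ → ℝ | (∀ i, 0 ≤ p i) ∧ ∑ i, p i = 1})) :
    -- conclusion: f₀ is in the K-L support of the prior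
    ∀ ε : ℝ, 0 < ε →
      0 < (lam.prod (volume.withDensity fun γ => ENNReal.ofReal (πd γ)))
        {θ : (Fin k₀ → ℝ) × (Fin k₀ → ℝ) |
          (∫ y in 𝒴, (∑ i, p₀ i * φ y (γ₀ i)) *
            Real.log ((∑ i, p₀ i * φ y (γ₀ i)) /
              (∑ i, θ.1 i * φ y (θ.2 i)))) < ε} := by
  classical
  intro ε hε
  obtain ⟨Cb, hCb⟩ := hA2
  have i0 : Fin k₀ := ⟨0, hk₀⟩
  haveI : Nonempty (Fin k₀) := ⟨i0⟩
  -- 𝒴 is nonempty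
  have h𝒴ne : 𝒴.Nonempty := by
    by_contra h
    rw [Set.not_nonempty_iff_eq_empty] at h
    have h1 := hφdens (γ₀ i0) (hγ₀ i0)
    simp [h] at h1
  set f₀ : ℝ → ℝ := fun y => ∑ i, p₀ i * φ y (γ₀ i) with hf₀def
  set ν : Measure ℝ := volume.restrict 𝒴 with hνdef
  obtain ⟨y₀, hy₀⟩ := h𝒴ne
  have hCbpos : 0 < Cb :=
    lt_of_lt_of_le (hφpos y₀ hy₀ _ (hγ₀ i0)) (hCb y₀ hy₀ _ (hγ₀ i0))
  -- kernels are integrable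
  have hφint : ∀ γ ∈ Γs, Integrable (fun y => φ y γ) ν := by
    intro γ hγ
    by_contra h
    have h1 := hφdens γ hγ
    rw [show (∫ y in 𝒴, φ y γ) = ∫ y, φ y γ ∂ν from rfl, integral_undef h] at h1
    norm_num at h1
  have hf₀int : Integrable f₀ ν :=
    integrable_finset_sum _ fun i _ => (hφint _ (hγ₀ i)).const_mul (p₀ i)
  have hf₀one : (∫ y, f₀ y ∂ν) = 1 := by
    rw [hf₀def, integral_finset_sum _ fun i _ => (hφint _ (hγ₀ i)).const_mul (p₀ i)]
    have : ∀ i ∈ Finset.univ, (∫ y, p₀ i * φ y (γ₀ i) ∂ν) = p₀ i := by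
      intro i _
      rw [integral_const_mul, hφdens _ (hγ₀ i), mul_one]
    rw [Finset.sum_congr rfl this, hp₀sum]
  obtain ⟨i₁, hi₁⟩ : ∃ i, 0 < p₀ i := by
    by_contra h
    push_neg at h
    have : (∑ i, p₀ i) ≤ 0 := Finset.sum_nonpos fun i _ => h i
    rw [hp₀sum] at this; norm_num at this
  have hf₀pos : ∀ y ∈ 𝒴, 0 < f₀ y := fun y hy =>
    Finset.sum_pos' (fun i _ => mul_nonneg (hp₀nn i) (hφpos y hy _ (hγ₀ i)).le)
      ⟨i₁, Finset.mem_univ _, mul_pos hi₁ (hφpos y hy _ (hγ₀ i₁))⟩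
  -- envelope facts
  set M : ℝ → ℝ := fun y => sSup ((fun γ => φ y γ) '' D₀) with hMdef
  set m : ℝ → ℝ := fun y => sInf ((fun γ => φ y γ) '' D₀) with hmdef
  have hD₀ne : D₀.Nonempty := ⟨γ₀ i0, interior_subset (hD₀i i0)⟩
  have hcont : ∀ y ∈ 𝒴, ContinuousOn (fun γ => φ y γ) D₀ := by
    intro y hy
    rw [Metric.continuousOn_iff]
    intro γ hγ η hη
    obtain ⟨δ, hδ, hδ'⟩ := hA1 η hη
    refine ⟨δ, hδ, fun γ' hγ' hd => ?_⟩
    rw [Real.dist_eq] at hd ⊢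
    exact hδ' y hy γ' (hD₀s hγ') γ (hD₀s hγ) hd
  have himg : ∀ y ∈ 𝒴, IsCompact ((fun γ => φ y γ) '' D₀) := fun y hy =>
    hD₀c.image_of_continuousOn (hcont y hy)
  have hMb : ∀ y ∈ 𝒴, ∀ γ ∈ D₀, φ y γ ≤ M y := fun y hy γ hγ =>
    le_csSup (himg y hy).bddAbove ⟨γ, hγ, rfl⟩
  have hmb : ∀ y ∈ 𝒴, ∀ γ ∈ D₀, m y ≤ φ y γ := fun y hy γ hγ =>
    csInf_le (himg y hy).bddBelow ⟨γ, hγ, rfl⟩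
  have hmpos : ∀ y ∈ 𝒴, 0 < m y := by
    intro y hy
    obtain ⟨γ, hγ, hEq⟩ := (himg y hy).sInf_mem (hD₀ne.image _)
    have h0 : 0 < (fun γ => φ y γ) γ := hφpos y hy _ (hD₀s hγ)
    simp only [hmdef]
    rw [← hEq]
    exact h0
  -- measurable representative of f₀
  have hf₀meas : AEStronglyMeasurable f₀ ν := hf₀int.aestronglyMeasurable
  set f₀' : ℝ → ℝ := hf₀meas.mk f₀ with hf₀'def
  have hf₀'sm : StronglyMeasurable f₀' := hf₀meas.stronglyMeasurable_mk
  have hf₀'ae : f₀ =ᵐ[ν] f₀' := hf₀meas.ae_eq_mk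
  set h₃ : ℝ → ℝ := fun y => f₀ y * |Real.log (M y) - Real.log (m y)| with hh₃def
  have hh₃int : Integrable h₃ ν := hA3
  -- region sets
  set A : ℕ → Set ℝ := fun n => {x | f₀' x ≤ 1 / (n + 1)} with hAdef
  have hAmeas : ∀ n, MeasurableSet (A n) := fun n =>
    hf₀'sm.measurable measurableSet_Iic
  -- dominated convergence
  have hDCT : Filter.Tendsto (fun n => ∫ y, Set.indicator (A n) h₃ y ∂ν)
      Filter.atTop (nhds 0) := by
    have h0 : (0 : ℝ) = ∫ y, (0 : ℝ) ∂ν := by simp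
    rw [h0]
    apply tendsto_integral_of_dominated_convergence (fun y => |h₃ y|)
    · intro n
      exact hh₃int.aestronglyMeasurable.indicator (hAmeas n)
    · exact hh₃int.abs
    · intro n
      filter_upwards with y
      rw [Real.norm_eq_abs]
      by_cases hyA : y ∈ A n
      · rw [Set.indicator_of_mem hyA]
      · rw [Set.indicator_of_notMem hyA]
        simp [abs_nonneg]
    · filter_upwards [ae_restrict_mem h𝒴, hf₀'ae] with y hy hEq
      have hpos : 0 < f₀' y := hEq ▸ hf₀pos y hy
      obtain ⟨N, hN⟩ := exists_nat_gt (1 / f₀' y)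
      have hev : ∀ᶠ n in Filter.atTop, Set.indicator (A n) h₃ y = 0 := by
        filter_upwards [Filter.eventually_ge_atTop N] with n hn
        apply Set.indicator_of_notMem
        simp only [hAdef, Set.mem_setOf_eq, not_le]
        have hn1 : (1 : ℝ) / f₀' y < (n : ℝ) + 1 := by
          have : (N : ℝ) ≤ n := by exact_mod_cast hn
          linarith
        rw [div_lt_iff₀ hpos] at hn1
        rw [div_lt_iff₀ (by positivity : (0 : ℝ) < (n : ℝ) + 1)]
        nlinarith
      exact Filter.Tendsto.congr' (hev.mono fun n h => h.symm) tendsto_const_nhds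
  obtain ⟨n, hn⟩ := (hDCT.eventually_lt_const (by linarith : (0 : ℝ) < ε / 2)).exists
  set t : ℝ := 1 / (n + 1) with htdef
  have htpos : 0 < t := by positivity
  -- constants
  set c : ℝ := min (t / 2) (t * ε / 8) with hcdef
  have hcpos : 0 < c := lt_min (by linarith) (by positivity)
  have hct : c ≤ t / 2 := min_le_left _ _
  have htc : t / 2 ≤ t - c := by linarith
  have htcpos : 0 < t - c := by linarith
  have hcε : c / (t - c) ≤ ε / 4 := by
    have h1 : c / (t - c) ≤ c / (t / 2) := by
      apply div_le_div_of_nonneg_left hcpos.le (by linarith) htc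
    have h2 : c / (t / 2) = 2 * c / t := by ring
    have h3 : 2 * c / t ≤ 2 * (t * ε / 8) / t := by
      gcongr
      exact min_le_right _ _
    have h4 : 2 * (t * ε / 8) / t = ε / 4 := by
      field_simp
      ring
    linarith
  obtain ⟨δ₁, hδ₁pos, hδ₁⟩ := hA1 (c / 2) (by linarith)
  set δp : ℝ := c / (2 * Cb) with hδpdef
  have hδppos : 0 < δp := by positivity
  -- radius into D₀
  obtain ⟨ρ, hρpos, hρ⟩ : ∃ ρ > 0, ∀ i, Metric.ball (γ₀ i) ρ ⊆ D₀ := by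
    have h := fun i => Metric.isOpen_iff.mp isOpen_interior (γ₀ i) (hD₀i i)
    choose ρ hρpos hρsub using h
    refine ⟨Finset.univ.inf' Finset.univ_nonempty ρ, ?_, fun i => ?_⟩
    · obtain ⟨j, _, hj⟩ := Finset.exists_mem_eq_inf' Finset.univ_nonempty ρ
      rw [hj]
      exact hρpos j
    · refine Set.Subset.trans (Metric.ball_subset_ball ?_) ((hρsub i).trans interior_subset)
      exact Finset.inf'_le _ (Finset.mem_univ i)
  -- A4 data
  obtain ⟨δ₄, hδ₄pos, hδ₄⟩ := hA4 γ₀ hγ₀ ε₁ hε₁ hsep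
  have hπγ₀ : 0 < πd γ₀ := hδ₄ γ₀ (by simpa using hδ₄pos)
  obtain ⟨r₂, hr₂pos, hr₂⟩ := Metric.continuousAt_iff.mp hπdc.continuousAt
    (πd γ₀ / 2) (by linarith)
  set r : ℝ := min (min ρ δ₁) (min (δ₄ / k₀) r₂) with hrdef
  have hrpos : 0 < r := lt_min (lt_min hρpos hδ₁pos)
    (lt_min (by positivity) hr₂pos)
  set W : Set (Fin k₀ → ℝ) := Metric.ball γ₀ r with hWdef
  have hWcoord : ∀ γ ∈ W, ∀ i, |γ i - γ₀ i| < r := by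
    intro γ hγ i
    rw [← Real.dist_eq]
    exact lt_of_le_of_lt (dist_le_pi_dist γ γ₀ i) hγ
  have hWD : ∀ γ ∈ W, ∀ i, γ i ∈ D₀ := by
    intro γ hγ i
    apply hρ i
    rw [Metric.mem_ball, Real.dist_eq]
    exact lt_of_lt_of_le (hWcoord γ hγ i) ((min_le_left _ _).trans (min_le_left _ _))
  have hWδ₁ : ∀ γ ∈ W, ∀ i, |γ i - γ₀ i| < δ₁ := fun γ hγ i =>
    lt_of_lt_of_le (hWcoord γ hγ i) ((min_le_left _ _).trans (min_le_right _ _))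
  have hWπ : ∀ γ ∈ W, πd γ₀ / 2 ≤ πd γ := by
    intro γ hγ
    have hd : dist γ γ₀ < r₂ :=
      lt_of_lt_of_le hγ ((min_le_right _ _).trans (min_le_right _ _))
    have := hr₂ hd
    rw [Real.dist_eq, abs_lt] at this
    linarith [this.1]
  -- measure of W is positive
  set μ : Measure (Fin k₀ → ℝ) := volume.withDensity fun γ => ENNReal.ofReal (πd γ)
    with hμdef
  have hWmeas : MeasurableSet W := Metric.isOpen_ball.measurableSet
  have hμW : 0 < μ W := by
    rw [hμdef, withDensity_apply _ hWmeas]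
    have hball : 0 < volume W := Metric.measure_ball_pos _ _ hrpos
    calc (0 : ENNReal) < ENNReal.ofReal (πd γ₀ / 2) * volume W := by
          exact ENNReal.mul_pos (by simp [ENNReal.ofReal_pos]; linarith) hball.ne'
      _ = ∫⁻ γ in W, ENNReal.ofReal (πd γ₀ / 2) ∂volume := by
          rw [setLIntegral_const]
      _ ≤ ∫⁻ γ in W, ENNReal.ofReal (πd γ) ∂volume := by
          apply setLIntegral_mono (ENNReal.measurable_ofReal.comp hπdc.measurable)
          exact fun γ hγ => ENNReal.ofReal_le_ofReal (hWπ γ hγ)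
  -- weights set
  set Δ : Set (Fin k₀ → ℝ) := {p : Fin k₀ → ℝ | (∀ i, 0 ≤ p i) ∧ ∑ i, p i = 1}
    with hΔdef
  set U : Set (Fin k₀ → ℝ) := Metric.ball p₀ (δp / (k₀ + 1)) with hUdef
  have hUΔpos : 0 < lam (U ∩ Δ) :=
    hlampos U Metric.isOpen_ball
      ⟨p₀, Metric.mem_ball_self (by positivity), hp₀nn, hp₀sum⟩
  have hUsum : ∀ p ∈ U, (∑ i, |p i - p₀ i|) ≤ δp := by
    intro p hp
    have h1 : ∀ i, |p i - p₀ i| ≤ δp / (k₀ + 1) := by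
      intro i
      rw [← Real.dist_eq]
      exact (dist_le_pi_dist p p₀ i).trans hp.le
    calc (∑ i, |p i - p₀ i|) ≤ ∑ _i : Fin k₀, δp / (k₀ + 1) :=
          Finset.sum_le_sum fun i _ => h1 i
      _ = k₀ * (δp / (k₀ + 1)) := by
          rw [Finset.sum_const, Finset.card_univ, Fintype.card_fin]; ring
      _ ≤ δp := by
          rw [mul_div_assoc']
          rw [div_le_iff₀ (by positivity)]
          nlinarith [hδppos]
  -- THE KEY BOUND
  have key : ∀ p ∈ U ∩ Δ, ∀ γ ∈ W,
      (∫ y, f₀ y * Real.log (f₀ y / (∑ i, p i * φ y (γ i))) ∂ν) < ε := by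
    intro p hp γ hγ
    have hpU := hp.1
    have hpnn := hp.2.1
    have hpsum := hp.2.2
    set fθ : ℝ → ℝ := fun y => ∑ i, p i * φ y (γ i) with hfθdef
    have hγD : ∀ i, γ i ∈ D₀ := hWD γ hγ
    have hγΓ : ∀ i, γ i ∈ Γs := fun i => hD₀s (hγD i)
    -- fθ is close to f₀
    have hclose : ∀ y ∈ 𝒴, |fθ y - f₀ y| ≤ c := by
      intro y hy
      have hEq : fθ y - f₀ y =
          ∑ i, ((p i - p₀ i) * φ y (γ i) + p₀ i * (φ y (γ i) - φ y (γ₀ i))) := by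
        rw [hfθdef, hf₀def, ← Finset.sum_sub_distrib]
        exact Finset.sum_congr rfl fun i _ => by ring
      rw [hEq]
      calc |∑ i, ((p i - p₀ i) * φ y (γ i) + p₀ i * (φ y (γ i) - φ y (γ₀ i)))|
          ≤ ∑ i, |(p i - p₀ i) * φ y (γ i) + p₀ i * (φ y (γ i) - φ y (γ₀ i))| :=
            Finset.abs_sum_le_sum_abs _ _
        _ ≤ ∑ i, (|p i - p₀ i| * Cb + p₀ i * (c / 2)) := by
            apply Finset.sum_le_sum
            intro i _
            have h1 : |(p i - p₀ i) * φ y (γ i)| ≤ |p i - p₀ i| * Cb := by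
              rw [abs_mul]
              apply mul_le_mul_of_nonneg_left _ (abs_nonneg _)
              rw [abs_of_pos (hφpos y hy _ (hγΓ i))]
              exact hCb y hy _ (hγΓ i)
            have h2 : |p₀ i * (φ y (γ i) - φ y (γ₀ i))| ≤ p₀ i * (c / 2) := by
              rw [abs_mul, abs_of_nonneg (hp₀nn i)]
              apply mul_le_mul_of_nonneg_left _ (hp₀nn i)
              exact (hδ₁ y hy _ (hγΓ i) _ (hγ₀ i) (hWδ₁ γ hγ i)).le
            calc |(p i - p₀ i) * φ y (γ i) + p₀ i * (φ y (γ i) - φ y (γ₀ i))|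
                ≤ |(p i - p₀ i) * φ y (γ i)| + |p₀ i * (φ y (γ i) - φ y (γ₀ i))| :=
                  abs_add_le _ _
              _ ≤ |p i - p₀ i| * Cb + p₀ i * (c / 2) := add_le_add h1 h2
        _ = (∑ i, |p i - p₀ i|) * Cb + (∑ i, p₀ i) * (c / 2) := by
            rw [Finset.sum_add_distrib, ← Finset.sum_mul, ← Finset.sum_mul]
        _ ≤ δp * Cb + 1 * (c / 2) := by
            apply add_le_add
            · exact mul_le_mul_of_nonneg_right (hUsum p hpU) hCbpos.le
            · rw [hp₀sum]
        _ = c := by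
            rw [hδpdef]
            field_simp
            ring
    -- lower bounds for fθ
    have hfθlb : ∀ y ∈ 𝒴, m y ≤ fθ y := by
      intro y hy
      calc m y = ∑ i, p i * m y := by rw [← Finset.sum_mul, hpsum, one_mul]
        _ ≤ ∑ i, p i * φ y (γ i) :=
            Finset.sum_le_sum fun i _ =>
              mul_le_mul_of_nonneg_left (hmb y hy _ (hγD i)) (hpnn i)
    have hfθpos : ∀ y ∈ 𝒴, 0 < fθ y := fun y hy =>
      lt_of_lt_of_le (hmpos y hy) (hfθlb y hy)
    have hf₀ub : ∀ y ∈ 𝒴, f₀ y ≤ M y := by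
      intro y hy
      calc f₀ y = ∑ i, p₀ i * φ y (γ₀ i) := rfl
        _ ≤ ∑ i, p₀ i * M y :=
            Finset.sum_le_sum fun i _ =>
              mul_le_mul_of_nonneg_left
                (hMb y hy _ (interior_subset (hD₀i i))) (hp₀nn i)
        _ = M y := by rw [← Finset.sum_mul, hp₀sum, one_mul]
    set g : ℝ → ℝ := fun y => f₀ y * Real.log (f₀ y / fθ y) with hgdef
    by_cases hgi : Integrable g ν
    · -- dominating function
      set H : ℝ → ℝ := fun y => Set.indicator (A n) h₃ y +
        Set.indicator (A n)ᶜ (fun z => c / (t - c) * f₀ z) y with hHdef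
      have hind2int : Integrable
          (fun y => Set.indicator (A n)ᶜ (fun z => c / (t - c) * f₀ z) y) ν :=
        (hf₀int.const_mul _).indicator (hAmeas n).compl
      have hind1int : Integrable (fun y => Set.indicator (A n) h₃ y) ν :=
        hh₃int.indicator (hAmeas n)
      have hHint : Integrable H ν := hind1int.add hind2int
      have hgH : g ≤ᵐ[ν] H := by
        filter_upwards [ae_restrict_mem h𝒴, hf₀'ae] with y hy hEq
        have hf₀y := hf₀pos y hy
        have hfθy := hfθpos y hy
        by_cases hyA : y ∈ A n
        · have hH : H y = h₃ y := by
            rw [hHdef]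
            simp only
            rw [Set.indicator_of_mem hyA, Set.indicator_of_notMem (by simp [hyA]),
              add_zero]
          rw [hH, hgdef, hh₃def]
          simp only
          apply mul_le_mul_of_nonneg_left _ hf₀y.le
          rw [Real.log_div hf₀y.ne' hfθy.ne']
          have h1 : Real.log (f₀ y) ≤ Real.log (M y) :=
            Real.log_le_log hf₀y (hf₀ub y hy)
          have h2 : Real.log (m y) ≤ Real.log (fθ y) :=
            Real.log_le_log (hmpos y hy) (hfθlb y hy)
          calc Real.log (f₀ y) - Real.log (fθ y)
              ≤ Real.log (M y) - Real.log (m y) := by linarith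
            _ ≤ |Real.log (M y) - Real.log (m y)| := le_abs_self _
        · have hH : H y = c / (t - c) * f₀ y := by
            rw [hHdef]
            simp only
            rw [Set.indicator_of_notMem hyA, Set.indicator_of_mem (by simp [hyA]),
              zero_add]
          have hyt : t < f₀ y := by
            have : ¬ f₀' y ≤ t := hyA
            rw [← hEq] at this
            linarith [not_le.mp this]
          have hfθlb2 : t - c ≤ fθ y := by
            have h1 := hclose y hy
            rw [abs_le] at h1
            linarith [h1.1]
          have hlog : Real.log (f₀ y / fθ y) ≤ c / (t - c) := by
            have h1 : Real.log (f₀ y / fθ y) ≤ f₀ y / fθ y - 1 :=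
              Real.log_le_sub_one_of_pos (div_pos hf₀y hfθy)
            have h2 : f₀ y / fθ y - 1 = (f₀ y - fθ y) / fθ y := by
              field_simp
            have h3 : (f₀ y - fθ y) / fθ y ≤ c / fθ y := by
              apply (div_le_div_iff_of_pos_right hfθy).mpr
              have := abs_le.mp (hclose y hy)
              linarith [this.1]
            have h4 : c / fθ y ≤ c / (t - c) :=
              div_le_div_of_nonneg_left hcpos.le htcpos hfθlb2
            linarith
          rw [hH, hgdef]
          simp only
          rw [mul_comm (c / (t - c)) (f₀ y)]
          exact mul_le_mul_of_nonneg_left hlog hf₀y.le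
      have hint1 : (∫ y, g y ∂ν) ≤ ∫ y, H y ∂ν := integral_mono_ae hgi hHint hgH
      have hint2 : (∫ y, H y ∂ν) =
          (∫ y, Set.indicator (A n) h₃ y ∂ν) +
          ∫ y, Set.indicator (A n)ᶜ (fun z => c / (t - c) * f₀ z) y ∂ν :=
        integral_add hind1int hind2int
      have hint3 : (∫ y, Set.indicator (A n)ᶜ (fun z => c / (t - c) * f₀ z) y ∂ν)
          ≤ ε / 4 := by
        have h1 : (∫ y, Set.indicator (A n)ᶜ (fun z => c / (t - c) * f₀ z) y ∂ν)
            ≤ ∫ y, c / (t - c) * f₀ y ∂ν := by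
          apply integral_mono_ae hind2int (hf₀int.const_mul _)
          filter_upwards [ae_restrict_mem h𝒴] with y hy
          by_cases hyA : y ∈ (A n)ᶜ
          · rw [Set.indicator_of_mem hyA]
          · rw [Set.indicator_of_notMem hyA]
            exact mul_nonneg (by positivity) (hf₀pos y hy).le
        have h2 : (∫ y, c / (t - c) * f₀ y ∂ν) = c / (t - c) := by
          rw [integral_const_mul, hf₀one, mul_one]
        linarith [hcε]
      exact lt_of_le_of_lt hint1 (by rw [hint2]; linarith [hn, hint3])
    · rw [integral_undef hgi]
      exact hε
  -- assembling
  have hsub : (U ∩ Δ) ×ˢ W ⊆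
      {θ : (Fin k₀ → ℝ) × (Fin k₀ → ℝ) |
        (∫ y in 𝒴, f₀ y * Real.log (f₀ y / (∑ i, θ.1 i * φ y (θ.2 i)))) < ε} := by
    rintro ⟨p, γ⟩ ⟨hpm, hγm⟩
    exact key p hpm γ hγm
  calc (0 : ENNReal) < lam (U ∩ Δ) * μ W := ENNReal.mul_pos hUΔpos.ne' hμW.ne'
    _ = (lam.prod μ) ((U ∩ Δ) ×ˢ W) := (Measure.prod_prod _ _).symm
    _ ≤ _ := measure_mono hsub
end

section
/- Let k ≥ 2, τ > 0, let ν be a positive integer, let ξ : ℝ → (0, ∞) be a continuous probability density, and let π be the probability density on ℝ^k proportional to (∏_{j=1}^k ξ(μ_j)) h(μ), where h is either the product repulsion function h(μ) = ∏_{1 ≤ j < s ≤ k} exp(−τ |μ_s − μ_j|^{−ν}) or the minimum repulsion function h(μ) = min_{1 ≤ j < s ≤ k} exp(−τ |μ_s − μ_j|^{−ν}). Let μ_0 ∈ ℝ^k have pairwise distinct coordinates. Then there exist constants u_1, u_2, u_3 > 0 such that for every 0 < ε ≤ u_3, ∫_{{μ : ‖μ − μ_0‖_1 ≤ ε}} π(μ)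 dμ ≥ u_1 exp(−u_2 k log(1/ε)), i.e. the prior mass of the L¹-ball of radius ε around μ_0 is at least u_1 ε^{u_2 k}. -/
open MeasureTheory

private lemma stmt6_meas_inf' {ι δ : Type*} [MeasurableSpace δ]
    (s : Finset ι) (H : s.Nonempty) (f : ι → δ → ℝ) (hf : ∀ i, Measurable (f i)) :
    Measurable fun x => s.inf' H fun i => f i x := by
  refine Finset.Nonempty.cons_induction
    (motive := fun s H => Measurable fun x => s.inf' H fun i => f i x)
    (fun a => by simpa using hf a) (fun a s ha hs ih => ?_) H
  simp only [Finset.inf'_cons hs]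
  exact (hf a).inf ih

open MeasureTheory Classical in
/-- condition C2: the repulsive prior on locations assigns mass
at least `u₁ exp(−u₂ k log(1/ε)) = u₁ ε^{u₂ k}` to the L¹-ball of radius `ε`
around any configuration `μ₀` with pairwise distinct coordinates. -/
theorem stmt_6 (k : ℕ) (hk : 2 ≤ k) (τ : ℝ) (hτ : 0 < τ) (ν : ℕ) (hν : 1 ≤ ν)
    (ξ : ℝ → ℝ) (hξc : Continuous ξ) (hξpos : ∀ x, 0 < ξ x)
    (hξdens : (∫ x, ξ x) = 1)
    (h : (Fin k → ℝ) → ℝ)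
    (hform :
      (∀ μ : Fin k → ℝ, h μ =
        ∏ p ∈ Finset.univ.filter (fun p : Fin k × Fin k => p.1 < p.2),
          (if μ p.2 = μ p.1 then 0
            else Real.exp (-(τ * (|μ p.2 - μ p.1| ^ ν)⁻¹)))) ∨
      (∀ μ : Fin k → ℝ, h μ =
        sInf ((fun p : Fin k × Fin k =>
          if μ p.2 = μ p.1 then 0
            else Real.exp (-(τ * (|μ p.2 - μ p.1| ^ ν)⁻¹))) ''
          {p : Fin k × Fin k | p.1 < p.2})))
    (μ₀ : Fin k → ℝ) (hμ₀ : ∀ s j : Fin k, s ≠ j → μ₀ s ≠ μ₀ j) :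
    ∃ u₁ u₂ u₃ : ℝ, 0 < u₁ ∧ 0 < u₂ ∧ 0 < u₃ ∧
      ∀ ε : ℝ, 0 < ε → ε ≤ u₃ →
        u₁ * Real.exp (-(u₂ * k * Real.log (1 / ε))) ≤
          ∫ μ in {μ : Fin k → ℝ | (∑ j, |μ j - μ₀ j|) ≤ ε},
            ((∏ j, ξ (μ j)) * h μ) /
              (∫ μ' : Fin k → ℝ, (∏ j, ξ (μ' j)) * h μ') := by
  classical
  have hk0 : (0 : ℝ) < k := by
    have : (2 : ℝ) ≤ k := by exact_mod_cast hk
    linarith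
  set g : (Fin k → ℝ) → Fin k × Fin k → ℝ := fun μ p =>
    if μ p.2 = μ p.1 then 0 else Real.exp (-(τ * (|μ p.2 - μ p.1| ^ ν)⁻¹)) with hgdef
  have hg0 : ∀ μ p, 0 ≤ g μ p := by
    intro μ p
    simp only [hgdef]
    split
    · exact le_rfl
    · exact (Real.exp_pos _).le
  have hg1 : ∀ μ p, g μ p ≤ 1 := by
    intro μ p
    simp only [hgdef]
    split
    · exact zero_le_one
    · rw [← Real.exp_zero]
      exact Real.exp_le_exp.mpr (neg_nonpos.mpr (by positivity))
  have hgm : ∀ p : Fin k × Fin k, Measurable fun μ => g μ p := by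
    intro p
    have hsub : Measurable fun μ : Fin k → ℝ => μ p.2 - μ p.1 :=
      (measurable_pi_apply p.2).sub (measurable_pi_apply p.1)
    have h2 : Measurable fun μ : Fin k → ℝ =>
        Real.exp (-(τ * (|μ p.2 - μ p.1| ^ ν)⁻¹)) :=
      Real.measurable_exp.comp ((((hsub.abs.pow_const ν).inv).const_mul τ).neg)
    exact Measurable.ite
      (measurableSet_eq_fun (measurable_pi_apply p.2) (measurable_pi_apply p.1))
      measurable_const h2
  -- the finset of ordered pairs
  set P : Finset (Fin k × Fin k) :=
    Finset.univ.filter (fun p : Fin k × Fin k => p.1 < p.2) with hP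
  have hp0 : ((⟨0, by omega⟩ : Fin k), (⟨1, by omega⟩ : Fin k)) ∈ P := by
    rw [hP]
    simp [Finset.mem_filter, Fin.mk_lt_mk]
  have hPne : P.Nonempty := ⟨_, hp0⟩
  have hPcard : P.card ≤ k * k := by
    calc P.card ≤ (Finset.univ : Finset (Fin k × Fin k)).card := Finset.card_filter_le _ _
      _ = k * k := by simp
  have hcoeP : {p : Fin k × Fin k | p.1 < p.2} = (↑P : Set (Fin k × Fin k)) := by
    ext p; simp [hP]
  -- uniform representation of h
  have hhrep : (∀ μ, h μ = ∏ p ∈ P, g μ p) ∨ (∀ μ, h μ = P.inf' hPne (g μ)) := by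
    rcases hform with H | H
    · left; intro μ; rw [H μ]
    · right; intro μ
      rw [H μ, hcoeP]
      exact (Finset.inf'_eq_csInf_image P hPne (g μ)).symm
  have hh0 : ∀ μ, 0 ≤ h μ := by
    intro μ
    rcases hhrep with H | H <;> rw [H μ]
    · exact Finset.prod_nonneg fun p _ => hg0 μ p
    · exact Finset.le_inf' _ _ fun p _ => hg0 μ p
  have hh1 : ∀ μ, h μ ≤ 1 := by
    intro μ
    rcases hhrep with H | H <;> rw [H μ]
    · exact Finset.prod_le_one (fun p _ => hg0 μ p) (fun p _ => hg1 μ p)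
    · exact (Finset.inf'_le _ hp0).trans (hg1 μ _)
  have hhm : Measurable h := by
    rcases hhrep with H | H
    · have : h = fun μ => ∏ p ∈ P, g μ p := funext H
      rw [this]
      exact Finset.measurable_prod _ fun p _ => hgm p
    · have : h = fun μ => P.inf' hPne (g μ) := funext H
      rw [this]
      exact stmt6_meas_inf' P hPne (fun p μ => g μ p) hgm
  -- positivity and integrability basics
  have hprod0 : ∀ μ : Fin k → ℝ, 0 ≤ ∏ j, ξ (μ j) :=
    fun μ => Finset.prod_nonneg fun j _ => (hξpos _).le
  have hf0 : ∀ μ : Fin k → ℝ, 0 ≤ (∏ j, ξ (μ j)) * h μ :=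
    fun μ => mul_nonneg (hprod0 μ) (hh0 μ)
  have hξint : Integrable ξ := by
    by_contra hcon
    rw [integral_undef hcon] at hξdens
    norm_num at hξdens
  have hprodint : Integrable fun μ : Fin k → ℝ => ∏ j, ξ (μ j) :=
    Integrable.fintype_prod (f := fun _ : Fin k => ξ) fun _ => hξint
  have hfm : Measurable fun μ : Fin k → ℝ => (∏ j, ξ (μ j)) * h μ :=
    (Finset.measurable_prod _ fun j _ =>
      hξc.measurable.comp (measurable_pi_apply j)).mul hhm
  have hfle : ∀ μ : Fin k → ℝ, (∏ j, ξ (μ j)) * h μ ≤ ∏ j, ξ (μ j) :=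
    fun μ => mul_le_of_le_one_right (hprod0 μ) (hh1 μ)
  have hfint : Integrable fun μ : Fin k → ℝ => (∏ j, ξ (μ j)) * h μ := by
    refine hprodint.mono hfm.aestronglyMeasurable (ae_of_all _ fun μ => ?_)
    rw [Real.norm_eq_abs, Real.norm_eq_abs, abs_of_nonneg (hf0 μ),
      abs_of_nonneg (hprod0 μ)]
    exact hfle μ
  have hint1 : (∫ μ : Fin k → ℝ, ∏ j, ξ (μ j)) = 1 := by
    rw [integral_fintype_prod_volume_eq_pow (ι := Fin k) ξ, hξdens, one_pow]
  set Z : ℝ := ∫ μ' : Fin k → ℝ, (∏ j, ξ (μ' j)) * h μ' with hZ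
  have hZ1 : Z ≤ 1 := by
    rw [hZ, ← hint1]
    exact integral_mono hfint hprodint hfle
  -- minimal gap
  set δ : ℝ := P.inf' hPne (fun p => |μ₀ p.2 - μ₀ p.1|) with hδ
  have hδpos : 0 < δ := by
    rw [hδ, Finset.lt_inf'_iff]
    intro p hp
    have hlt : p.1 < p.2 := by
      rw [hP] at hp
      exact (Finset.mem_filter.mp hp).2
    exact abs_pos.mpr (sub_ne_zero.mpr (hμ₀ _ _ hlt.ne'))
  have hδle : ∀ p ∈ P, δ ≤ |μ₀ p.2 - μ₀ p.1| := fun p hp => Finset.inf'_le _ hp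
  -- lower bound for ξ on a compact neighbourhood
  have hkne : (Finset.univ : Finset (Fin k)).Nonempty :=
    ⟨⟨0, by omega⟩, Finset.mem_univ _⟩
  set R : ℝ := (Finset.univ.sup' hkne fun j => |μ₀ j|) + 1 with hR
  have hRbound : ∀ j : Fin k, |μ₀ j| + 1 ≤ R := by
    intro j
    have := Finset.le_sup' (fun j => |μ₀ j|) (Finset.mem_univ j)
    rw [hR]; linarith
  have hRpos : (0:ℝ) < R := lt_of_lt_of_le (by positivity) (hRbound ⟨0, by omega⟩)
  obtain ⟨x₀, hx₀mem, hx₀min⟩ :=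
    isCompact_Icc.exists_isMinOn (α := ℝ) (Set.nonempty_Icc.mpr (by linarith : -R ≤ R))
      hξc.continuousOn
  set cξ : ℝ := ξ x₀ with hcξdef
  have hcξ : 0 < cξ := hξpos x₀
  -- repulsion lower constants
  set c : ℝ := Real.exp (-(τ * ((δ/2) ^ ν)⁻¹)) with hc
  have hcpos : 0 < c := Real.exp_pos _
  have hc1 : c ≤ 1 := by
    rw [hc, ← Real.exp_zero]
    exact Real.exp_le_exp.mpr (neg_nonpos.mpr (by positivity))
  set ch : ℝ := c ^ (k * k) with hch
  have hchpos : 0 < ch := by positivity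
  have hchle : ch ≤ c := by
    rw [hch]
    exact pow_le_of_le_one hcpos.le hc1 (Nat.mul_ne_zero (by omega) (by omega))
  set u₃ : ℝ := min 1 (δ / 4) with hu₃
  have hu₃pos : 0 < u₃ := lt_min one_pos (by linarith)
  -- KEY: box lower bound for the un-normalized mass
  have key : ∀ ε : ℝ, 0 < ε → ε ≤ u₃ →
      (cξ ^ k * ch) * (2 / k) ^ k * ε ^ k ≤
        ∫ μ in {μ : Fin k → ℝ | (∑ j, |μ j - μ₀ j|) ≤ ε},
          (∏ j, ξ (μ j)) * h μ := by
    intro ε hε hεu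
    have hε1 : ε ≤ 1 := hεu.trans (min_le_left _ _)
    have hεδ : ε ≤ δ / 4 := hεu.trans (min_le_right _ _)
    set r : ℝ := ε / k with hr
    have hr0 : 0 < r := by positivity
    have hrk : r * k = ε := div_mul_cancel₀ ε hk0.ne'
    have hrε : r ≤ ε := by
      rw [hr]
      exact div_le_self hε.le (by exact_mod_cast Nat.one_le_of_lt hk)
    have hk2 : (2:ℝ) ≤ k := by exact_mod_cast hk
    have h2r : 2 * r ≤ ε := by nlinarith [mul_le_mul_of_nonneg_left hk2 hr0.le]
    set Box : Set (Fin k → ℝ) :=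
      Set.pi Set.univ fun j => Set.Icc (μ₀ j - r) (μ₀ j + r) with hBox
    have hBoxm : MeasurableSet Box :=
      MeasurableSet.univ_pi fun j => measurableSet_Icc
    have hvol : volume Box = ENNReal.ofReal (2 * r) ^ k := by
      rw [hBox, volume_pi_pi]
      have hIcc : ∀ j : Fin k,
          volume (Set.Icc (μ₀ j - r) (μ₀ j + r)) = ENNReal.ofReal (2 * r) := by
        intro j; rw [Real.volume_Icc]; congr 1; ring
      simp only [hIcc, Finset.prod_const, Finset.card_univ, Fintype.card_fin]
    have hvoltop : volume Box ≠ ⊤ := by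
      rw [hvol]; exact ENNReal.pow_ne_top ENNReal.ofReal_ne_top
    have hin : ∀ μ ∈ Box, ∀ j, |μ j - μ₀ j| ≤ r := by
      intro μ hμ j
      have hj := hμ j (Set.mem_univ j)
      simp only [Set.mem_Icc] at hj
      rw [abs_le]; constructor <;> linarith [hj.1, hj.2]
    -- pointwise lower bound on the box
    have hlow : ∀ μ ∈ Box, cξ ^ k * ch ≤ (∏ j, ξ (μ j)) * h μ := by
      intro μ hμ
      have hdist : ∀ p ∈ P, δ / 2 ≤ |μ p.2 - μ p.1| := by
        intro p hp
        have h1 := hin μ hμ p.1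
        have h2 := hin μ hμ p.2
        have h3 := hδle p hp
        have t0 : (μ p.2 - μ p.1) - (μ₀ p.2 - μ₀ p.1)
            = (μ p.2 - μ₀ p.2) - (μ p.1 - μ₀ p.1) := by ring
        have t1 : |(μ p.2 - μ p.1) - (μ₀ p.2 - μ₀ p.1)|
            ≤ |μ p.2 - μ₀ p.2| + |μ p.1 - μ₀ p.1| := by
          rw [t0]; exact abs_sub _ _
        have t2 : |μ₀ p.2 - μ₀ p.1| - |(μ p.2 - μ p.1) - (μ₀ p.2 - μ₀ p.1)|
            ≤ |μ p.2 - μ p.1| := by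
          have h4 := abs_sub_abs_le_abs_sub (μ₀ p.2 - μ₀ p.1) (μ p.2 - μ p.1)
          have h5 := abs_sub_comm (μ₀ p.2 - μ₀ p.1) (μ p.2 - μ p.1)
          linarith
        linarith
      have hgp : ∀ p ∈ P, c ≤ g μ p := by
        intro p hp
        have hd := hdist p hp
        have hne : μ p.2 ≠ μ p.1 := by
          intro hcon
          rw [hcon, sub_self, abs_zero] at hd
          linarith
        rw [hgdef]
        simp only [if_neg hne]
        rw [hc]
        apply Real.exp_le_exp.mpr
        have hpow : (δ/2) ^ ν ≤ |μ p.2 - μ p.1| ^ ν :=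
          pow_le_pow_left₀ (by linarith) hd ν
        have hpp : (0:ℝ) < (δ/2) ^ ν := by positivity
        have hinv : (|μ p.2 - μ p.1| ^ ν)⁻¹ ≤ ((δ/2) ^ ν)⁻¹ := by
          apply inv_anti₀ hpp hpow
        have := mul_le_mul_of_nonneg_left hinv hτ.le
        linarith
      have hboxh : ch ≤ h μ := by
        rcases hhrep with H | H <;> rw [H μ]
        · calc ch = c ^ (k*k) := hch
            _ ≤ c ^ P.card := pow_le_pow_of_le_one hcpos.le hc1 hPcard
            _ = ∏ _p ∈ P, c := (Finset.prod_const c).symm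
            _ ≤ ∏ p ∈ P, g μ p := Finset.prod_le_prod (fun _ _ => hcpos.le) hgp
        · exact hchle.trans (Finset.le_inf' _ _ hgp)
      have hboxξ : cξ ^ k ≤ ∏ j, ξ (μ j) := by
        have hj : ∀ j, cξ ≤ ξ (μ j) := by
          intro j
          have habs : |μ j| ≤ R := by
            have h1 := hin μ hμ j
            have h2 := hRbound j
            calc |μ j| = |μ₀ j + (μ j - μ₀ j)| := by ring_nf
              _ ≤ |μ₀ j| + |μ j - μ₀ j| := abs_add_le _ _
              _ ≤ R := by linarith [hrε, hε1]
          have hmem : μ j ∈ Set.Icc (-R) R := by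
            rw [Set.mem_Icc]
            exact abs_le.mp habs
          exact isMinOn_iff.mp hx₀min (μ j) hmem
        calc cξ ^ k = ∏ _j : Fin k, cξ := by
              rw [Finset.prod_const, Finset.card_univ, Fintype.card_fin]
          _ ≤ ∏ j, ξ (μ j) := Finset.prod_le_prod (fun _ _ => hcξ.le) (fun j _ => hj j)
      exact mul_le_mul hboxξ hboxh hchpos.le (hprod0 μ)
    have hsub : Box ⊆ {μ : Fin k → ℝ | (∑ j, |μ j - μ₀ j|) ≤ ε} := by
      intro μ hμ
      simp only [Set.mem_setOf_eq]
      calc ∑ j, |μ j - μ₀ j| ≤ ∑ _j : Fin k, r :=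
            Finset.sum_le_sum fun j _ => hin μ hμ j
        _ = k * r := by
            rw [Finset.sum_const, Finset.card_univ, Fintype.card_fin, nsmul_eq_mul]
        _ = ε := by rw [mul_comm]; exact hrk
    have hpows : (cξ ^ k * ch) * (2 / (k:ℝ)) ^ k * ε ^ k
        = (cξ ^ k * ch) * (2 * r) ^ k := by
      have h2rε : (2 / (k:ℝ)) * ε = 2 * r := by rw [hr]; ring
      rw [mul_assoc, ← mul_pow, h2rε]
    calc (cξ ^ k * ch) * (2 / (k:ℝ)) ^ k * ε ^ k
        = (cξ ^ k * ch) * (volume Box).toReal := by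
          rw [hpows, hvol, ENNReal.toReal_pow, ENNReal.toReal_ofReal (by positivity)]
      _ ≤ ∫ μ in Box, (∏ j, ξ (μ j)) * h μ :=
          by simpa [Measure.real, smul_eq_mul, mul_comm] using
            setIntegral_ge_of_const_le hBoxm hvoltop hlow hfint.integrableOn
      _ ≤ ∫ μ in {μ : Fin k → ℝ | (∑ j, |μ j - μ₀ j|) ≤ ε}, (∏ j, ξ (μ j)) * h μ :=
          setIntegral_mono_set hfint.integrableOn (ae_of_all _ hf0)
            (HasSubset.Subset.eventuallyLE hsub)
  -- positivity of the normalizing constant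
  have hZpos : 0 < Z := by
    have h1 := key u₃ hu₃pos le_rfl
    have h2 : (∫ μ in {μ : Fin k → ℝ | (∑ j, |μ j - μ₀ j|) ≤ u₃},
        (∏ j, ξ (μ j)) * h μ) ≤ Z := by
      rw [hZ]
      exact setIntegral_le_integral hfint (ae_of_all _ hf0)
    have h3 : 0 < (cξ ^ k * ch) * (2 / (k:ℝ)) ^ k * u₃ ^ k := by positivity
    linarith
  -- conclusion
  refine ⟨(cξ ^ k * ch) * (2 / k) ^ k, 1, u₃, by positivity, one_pos, hu₃pos, ?_⟩
  intro ε hε hεu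
  rw [integral_div]
  have hexp : Real.exp (-(1 * (k:ℝ) * Real.log (1 / ε))) = ε ^ k := by
    rw [one_mul, one_div, Real.log_inv, mul_neg, neg_neg, Real.exp_nat_mul,
      Real.exp_log hε]
  rw [hexp]
  have hA := key ε hε hεu
  have hS0 : 0 ≤ ∫ μ in {μ : Fin k → ℝ | (∑ j, |μ j - μ₀ j|) ≤ ε},
      (∏ j, ξ (μ j)) * h μ :=
    integral_nonneg fun μ => hf0 μ
  rw [le_div_iff₀ hZpos]
  nlinarith [hA, hS0, hZ1, hZpos]
end

section
/- Let 𝒴 ⊆ ℝ be measurable, Γ ⊆ ℝ, k_0 ≥ 1, and let φ : 𝒴 × Γ → (0, ∞) be a kernel such that each φ(·, γ) is a probability density, satisfying (A1) for every η > 0 there is δ > 0 such that |φ(y, γ) − φ(y, γ')| < η for all y whenever |γ − γ'| < δ, and (A2) φ is bounded above. Let f_0 = Σ_{h=1}^{k_0} p_{0h} φ(·, γ_{0h}) be a probability density with p_0 in the simplex and γ_0 ∈ Γ^{k_0}, let D_0 ⊆ Γ be a compact set containing γ_{01}, …, γ_{0k_0} in its interior, and assume (A3) ∫ f_0(y) |log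 sup_{γ ∈ D_0} φ(y, γ) − log inf_{γ ∈ D_0} φ(y, γ)| dy < ∞. Then for every ε > 0 there exists δ > 0 such that for every θ = (p, γ) with max_h |p_h − p_{0h}| ≤ δ, max_h |γ_h − γ_{0h}| ≤ δ, and γ_h ∈ D_0 for all h, one has ∫ f_0(y) log(f_0(y) / f_θ(y)) dy < ε, where f_θ = Σ_{h=1}^{k_0} p_h φ(·, γ_h). -/
open MeasureTheory Filter Topology

/-- continuity of the Kullback–Leibler divergence in the
mixture parameters: under A1, A2 and the integrable log-envelope condition
A3 over a compact set `D₀`, for every `ε > 0` there is `δ > 0` such that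
`KL(f₀, f_θ) < ε` whenever the parameters `θ = (p, γ)` are within `δ` of
`θ₀ = (p₀, γ₀)` (with locations in `D₀`). -/
theorem stmt_16 (𝒴 : Set ℝ) (h𝒴 : MeasurableSet 𝒴) (Γs : Set ℝ)
    (k₀ : ℕ) (hk₀ : 1 ≤ k₀) (φ : ℝ → ℝ → ℝ)
    (hφpos : ∀ y ∈ 𝒴, ∀ γ ∈ Γs, 0 < φ y γ)
    (hφdens : ∀ γ ∈ Γs, (∫ y in 𝒴, φ y γ) = 1)
    -- condition A1
    (hA1 : ∀ η : ℝ, 0 < η → ∃ δ : ℝ, 0 < δ ∧ ∀ y ∈ 𝒴, ∀ γ ∈ Γs, ∀ γ' ∈ Γs,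
      |γ - γ'| < δ → |φ y γ - φ y γ'| < η)
    -- condition A2
    (hA2 : ∃ Cb : ℝ, ∀ y ∈ 𝒴, ∀ γ ∈ Γs, φ y γ ≤ Cb)
    (p₀ : Fin k₀ → ℝ) (hp₀nn : ∀ i, 0 ≤ p₀ i) (hp₀sum : ∑ i, p₀ i = 1)
    (γ₀ : Fin k₀ → ℝ) (hγ₀ : ∀ i, γ₀ i ∈ Γs)
    (D₀ : Set ℝ) (hD₀c : IsCompact D₀) (hD₀s : D₀ ⊆ Γs)
    (hD₀i : ∀ i, γ₀ i ∈ interior D₀)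
    -- condition A3
    (hA3 : IntegrableOn (fun y => (∑ i, p₀ i * φ y (γ₀ i)) *
        |Real.log (sSup ((fun γ => φ y γ) '' D₀)) -
          Real.log (sInf ((fun γ => φ y γ) '' D₀))|) 𝒴) :
    ∀ ε : ℝ, 0 < ε → ∃ δ : ℝ, 0 < δ ∧
      ∀ (p : Fin k₀ → ℝ) (γ : Fin k₀ → ℝ),
        (∀ i, 0 ≤ p i) → (∑ i, p i) = 1 →
        (∀ i, |p i - p₀ i| ≤ δ) → (∀ i, |γ i - γ₀ i| ≤ δ) →
        (∀ i, γ i ∈ D₀) →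
        (∫ y in 𝒴, (∑ i, p₀ i * φ y (γ₀ i)) *
          Real.log ((∑ i, p₀ i * φ y (γ₀ i)) /
            (∑ i, p i * φ y (γ i)))) < ε := by
  intro ε hε
  by_contra hcon
  push_neg at hcon
  choose P G hPnn hPsum hPd hGd hGD hge using fun n : ℕ =>
    hcon (1 / (n + 1 : ℝ)) (by positivity)
  have hγ₀D : ∀ i, γ₀ i ∈ D₀ := fun i => interior_subset (hD₀i i)
  have i0 : Fin k₀ := ⟨0, hk₀⟩
  set μ := volume.restrict 𝒴 with hμ
  set f₀ : ℝ → ℝ := fun y => ∑ i, p₀ i * φ y (γ₀ i) with hf₀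
  set F : ℕ → ℝ → ℝ := fun n y =>
    f₀ y * Real.log (f₀ y / ∑ i, P n i * φ y (G n i)) with hF
  set g : ℝ → ℝ := fun y =>
    f₀ y * |Real.log (sSup ((fun γ => φ y γ) '' D₀)) -
      Real.log (sInf ((fun γ => φ y γ) '' D₀))| with hg
  -- each kernel is integrable on 𝒴 (else its integral would be 0, not 1)
  have hint : ∀ γ ∈ Γs, Integrable (fun y => φ y γ) μ := by
    intro γ hγ
    by_contra h
    have h1 := hφdens γ hγ
    rw [MeasureTheory.integral_undef h] at h1
    exact zero_ne_one h1
  have hmφ : ∀ γ ∈ Γs, AEMeasurable (fun y => φ y γ) μ := fun γ hγ =>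
    (hint γ hγ).aestronglyMeasurable.aemeasurable
  have hmf₀ : AEMeasurable f₀ μ := by
    apply Finset.aemeasurable_fun_sum
    intro i _
    exact (hmφ _ (hγ₀ i)).const_mul _
  have hmfn : ∀ n, AEMeasurable (fun y => ∑ i, P n i * φ y (G n i)) μ := by
    intro n
    apply Finset.aemeasurable_fun_sum
    intro i _
    exact (hmφ _ (hD₀s (hGD n i))).const_mul _
  have hFmeas : ∀ n, AEStronglyMeasurable (F n) μ := fun n =>
    (hmf₀.mul (Real.measurable_log.comp_aemeasurable
      (hmf₀.div (hmfn n)))).aestronglyMeasurable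
  -- continuity of φ y in γ on D₀
  have hcontφ : ∀ y ∈ 𝒴, ContinuousOn (fun γ => φ y γ) D₀ := by
    intro y hy
    rw [Metric.continuousOn_iff]
    intro b hb η hη
    obtain ⟨δ, hδ, hδ'⟩ := hA1 η hη
    refine ⟨δ, hδ, fun a ha hab => ?_⟩
    rw [Real.dist_eq] at hab ⊢
    exact hδ' y hy a (hD₀s ha) b (hD₀s hb) hab
  -- the dominating bound
  have hbound : ∀ n, ∀ᵐ y ∂μ, ‖F n y‖ ≤ g y := by
    intro n
    rw [hμ, ae_restrict_iff' h𝒴]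
    refine Filter.Eventually.of_forall fun y hy => ?_
    set S := (fun γ => φ y γ) '' D₀ with hS
    have hSc : IsCompact S := hD₀c.image_of_continuousOn (hcontφ y hy)
    have hSne : S.Nonempty := ⟨_, Set.mem_image_of_mem _ (hγ₀D i0)⟩
    set m := sInf S with hm
    set M := sSup S with hM
    have hmpos : 0 < m := by
      obtain ⟨γ, hγ, hEq⟩ := hSc.sInf_mem hSne
      rw [hm, ← hEq]
      exact hφpos y hy γ (hD₀s hγ)
    have hlbφ : ∀ γ ∈ D₀, m ≤ φ y γ := fun γ hγ =>
      csInf_le hSc.bddBelow ⟨γ, hγ, rfl⟩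
    have hubφ : ∀ γ ∈ D₀, φ y γ ≤ M := fun γ hγ =>
      le_csSup hSc.bddAbove ⟨γ, hγ, rfl⟩
    have hcomb : ∀ (q c : Fin k₀ → ℝ), (∀ i, 0 ≤ q i) → ∑ i, q i = 1 →
        (∀ i, c i ∈ D₀) →
        m ≤ (∑ i, q i * φ y (c i)) ∧ (∑ i, q i * φ y (c i)) ≤ M := by
      intro q c hq hqs hc
      constructor
      · calc m = ∑ i, q i * m := by rw [← Finset.sum_mul, hqs, one_mul]
          _ ≤ ∑ i, q i * φ y (c i) :=
            Finset.sum_le_sum fun i _ =>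
              mul_le_mul_of_nonneg_left (hlbφ _ (hc i)) (hq i)
      · calc (∑ i, q i * φ y (c i)) ≤ ∑ i, q i * M :=
            Finset.sum_le_sum fun i _ =>
              mul_le_mul_of_nonneg_left (hubφ _ (hc i)) (hq i)
          _ = M := by rw [← Finset.sum_mul, hqs, one_mul]
    obtain ⟨h0l, h0u⟩ := hcomb p₀ γ₀ hp₀nn hp₀sum hγ₀D
    obtain ⟨hnl, hnu⟩ := hcomb (P n) (G n) (hPnn n) (hPsum n) (hGD n)
    have hf₀pos : 0 < f₀ y := lt_of_lt_of_le hmpos h0l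
    have hfnpos : 0 < ∑ i, P n i * φ y (G n i) := lt_of_lt_of_le hmpos hnl
    have l1 : Real.log m ≤ Real.log (f₀ y) := Real.log_le_log hmpos h0l
    have l2 : Real.log (f₀ y) ≤ Real.log M := Real.log_le_log hf₀pos h0u
    have l3 : Real.log m ≤ Real.log (∑ i, P n i * φ y (G n i)) :=
      Real.log_le_log hmpos hnl
    have l4 : Real.log (∑ i, P n i * φ y (G n i)) ≤ Real.log M :=
      Real.log_le_log hfnpos hnu
    have hlog : |Real.log (f₀ y / ∑ i, P n i * φ y (G n i))| ≤
        Real.log M - Real.log m := by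
      rw [Real.log_div hf₀pos.ne' hfnpos.ne', abs_sub_le_iff]
      constructor <;> linarith
    show ‖F n y‖ ≤ f₀ y * |Real.log M - Real.log m|
    rw [hF, Real.norm_eq_abs, abs_mul, abs_of_nonneg hf₀pos.le]
    calc f₀ y * |Real.log (f₀ y / ∑ i, P n i * φ y (G n i))| ≤
          f₀ y * (Real.log M - Real.log m) :=
        mul_le_mul_of_nonneg_left hlog hf₀pos.le
      _ ≤ f₀ y * |Real.log M - Real.log m| :=
        mul_le_mul_of_nonneg_left (le_abs_self _) hf₀pos.le
  -- pointwise convergence to 0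
  have hlim : ∀ᵐ y ∂μ, Tendsto (fun n => F n y) atTop (𝓝 0) := by
    rw [hμ, ae_restrict_iff' h𝒴]
    refine Filter.Eventually.of_forall fun y hy => ?_
    have hf₀pos : 0 < f₀ y := by
      obtain ⟨i, hi⟩ : ∃ i, 0 < p₀ i := by
        by_contra h
        push_neg at h
        have hz : ∀ i, p₀ i = 0 := fun i => le_antisymm (h i) (hp₀nn i)
        rw [Finset.sum_congr rfl fun i _ => hz i] at hp₀sum
        simp at hp₀sum
      exact Finset.sum_pos'
        (fun j _ => mul_nonneg (hp₀nn j) (hφpos y hy _ (hγ₀ j)).le)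
        ⟨i, Finset.mem_univ i, mul_pos hi (hφpos y hy _ (hγ₀ i))⟩
    have htend : Tendsto (fun n => ∑ i, P n i * φ y (G n i)) atTop
        (𝓝 (f₀ y)) := by
      have hfy : f₀ y = ∑ i, p₀ i * φ y (γ₀ i) := rfl
      rw [hfy]
      refine tendsto_finset_sum _ fun i _ => Tendsto.mul ?_ ?_
      · have h1 : Tendsto (fun n : ℕ => (P n i - p₀ i)) atTop (𝓝 0) :=
          squeeze_zero_norm
            (fun n => by simpa [Real.norm_eq_abs] using hPd n i)
            tendsto_one_div_add_atTop_nhds_zero_nat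
        have h2 := h1.add_const (p₀ i)
        simpa using h2
      · rw [Metric.tendsto_atTop]
        intro η hη
        obtain ⟨δ, hδ, hδ'⟩ := hA1 η hη
        obtain ⟨N, hN⟩ :=
          Metric.tendsto_atTop.mp (tendsto_one_div_add_atTop_nhds_zero_nat (𝕜 := ℝ)) δ hδ
        refine ⟨N, fun n hn => ?_⟩
        rw [Real.dist_eq]
        have h2 := hN n hn
        rw [Real.dist_eq, sub_zero] at h2
        have h3 : |G n i - γ₀ i| < δ :=
          lt_of_le_of_lt (hGd n i) (lt_of_le_of_lt (le_abs_self _) h2)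
        exact hδ' y hy _ (hD₀s (hGD n i)) _ (hγ₀ i) h3
    have hdiv : Tendsto (fun n => f₀ y / ∑ i, P n i * φ y (G n i)) atTop
        (𝓝 (f₀ y / f₀ y)) := tendsto_const_nhds.div htend hf₀pos.ne'
    rw [div_self hf₀pos.ne'] at hdiv
    have hlogt := hdiv.log one_ne_zero
    rw [Real.log_one] at hlogt
    have h4 := (tendsto_const_nhds :
      Tendsto (fun _ : ℕ => f₀ y) atTop (𝓝 (f₀ y))).mul hlogt
    rw [mul_zero] at h4
    exact h4
  have hconv := MeasureTheory.tendsto_integral_of_dominated_convergence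
    (f := fun _ => (0 : ℝ)) g hFmeas hA3 hbound hlim
  rw [MeasureTheory.integral_zero] at hconv
  obtain ⟨n, hn⟩ := (hconv.eventually (gt_mem_nhds hε)).exists
  have hEq : (∫ y, F n y ∂μ) =
      ∫ y in 𝒴, (∑ i, p₀ i * φ y (γ₀ i)) *
        Real.log ((∑ i, p₀ i * φ y (γ₀ i)) /
          (∑ i, P n i * φ y (G n i))) := rfl
  exact absurd (hge n) (not_le.mpr (hEq ▸ hn))
end
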